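/- For every integer m with |m| ≥ 2, the homomorphism φ: BS(1,m) → SL(2,ℝ) with φ(a) = [[√|m|,0],[0,1/√|m|]] and φ(b) = [[1,1],[0,1]] is injective; equivalently, BS(1,m) acts freely on the hyperbolic plane ℍ² via φ composed with the action of PSL(2,ℝ). -/

import Mathlib

/-- The defining relator of the Baumslag–Solitar group `BS(1,m)`, with
generators `true ↦ a`, `false ↦ b`. -/
def bsRel (m : ℤ) : Set (FreeGroup Bool) :=
  {FreeGroup.of true * FreeGroup.of false * (FreeGroup.of true)⁻¹ *
    (FreeGroup.of false ^ m)⁻¹}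

/-- The Baumslag–Solitar group `BS(1,m) = ⟨a, b | a b a⁻¹ = bᵐ⟩`. -/
abbrev BS (m : ℤ) := PresentedGroup (bsRel m)

namespace BSaux

variable (m : ℤ)

noncomputable abbrev A : BS m := PresentedGroup.of true
noncomputable abbrev B : BS m := PresentedGroup.of false

lemma bs_rel : A m * B m * (A m)⁻¹ = (B m) ^ m := by
  have h : (QuotientGroup.mk (FreeGroup.of true * FreeGroup.of false *
      (FreeGroup.of true)⁻¹ * (FreeGroup.of false ^ m)⁻¹) : BS m) = 1 := by
    rw [QuotientGroup.eq_one_iff]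
    exact Subgroup.subset_normalClosure rfl
  simp only [QuotientGroup.mk_mul, QuotientGroup.mk_inv, QuotientGroup.mk_zpow] at h
  exact mul_inv_eq_one.mp h

lemma conj_zpow (k : ℤ) : A m * (B m) ^ k * (A m)⁻¹ = (B m) ^ (m * k) := by
  have := map_zpow (MulAut.conj (A m)) (B m) k
  simp only [MulAut.conj_apply] at this
  rw [this, bs_rel, ← zpow_mul]

lemma conj_pow_zpow (t : ℕ) (k : ℤ) :
    (A m) ^ t * (B m) ^ k * ((A m) ^ t)⁻¹ = (B m) ^ (m ^ t * k) := by
  induction t generalizing k with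
  | zero => simp
  | succ n ih =>
    have : (A m) ^ (n + 1) = A m * (A m) ^ n := by rw [pow_succ']
    rw [this, mul_inv_rev]
    calc A m * (A m) ^ n * (B m) ^ k * (((A m) ^ n)⁻¹ * (A m)⁻¹)
        = A m * ((A m) ^ n * (B m) ^ k * ((A m) ^ n)⁻¹) * (A m)⁻¹ := by group
      _ = A m * (B m) ^ (m ^ n * k) * (A m)⁻¹ := by rw [ih]
      _ = (B m) ^ (m * (m ^ n * k)) := conj_zpow m _
      _ = (B m) ^ (m ^ (n + 1) * k) := by ring_nf

/-- Normal form: every element of `BS(1,m)` is `a⁻ⁱ bᵏ aʲ`. -/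
def NF (g : BS m) : Prop := ∃ (i j : ℕ) (k : ℤ), g = ((A m) ^ i)⁻¹ * (B m) ^ k * (A m) ^ j

lemma nf_one : NF m 1 := ⟨0, 0, 0, by simp⟩

lemma nf_mul {g₁ g₂ : BS m} (h₁ : NF m g₁) (h₂ : NF m g₂) : NF m (g₁ * g₂) := by
  obtain ⟨i₁, j₁, k₁, rfl⟩ := h₁
  obtain ⟨i₂, j₂, k₂, rfl⟩ := h₂
  rcases le_or_gt i₂ j₁ with h | h
  · refine ⟨i₁, j₁ - i₂ + j₂, k₁ + m ^ (j₁ - i₂) * k₂, ?_⟩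
    have key : (A m) ^ (j₁ - i₂) * (B m) ^ k₂
        = (B m) ^ (m ^ (j₁ - i₂) * k₂) * (A m) ^ (j₁ - i₂) := by
      rw [← conj_pow_zpow]; group
    have hj : (A m) ^ j₁ = (A m) ^ (j₁ - i₂) * (A m) ^ i₂ := by
      rw [← pow_add]; congr 1; omega
    calc ((A m) ^ i₁)⁻¹ * (B m) ^ k₁ * (A m) ^ j₁ * (((A m) ^ i₂)⁻¹ * (B m) ^ k₂ * (A m) ^ j₂)
        = ((A m) ^ i₁)⁻¹ * (B m) ^ k₁ * ((A m) ^ (j₁ - i₂) * (B m) ^ k₂) * (A m) ^ j₂ := by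
          rw [hj]; group
      _ = ((A m) ^ i₁)⁻¹ * (B m) ^ k₁ *
            ((B m) ^ (m ^ (j₁ - i₂) * k₂) * (A m) ^ (j₁ - i₂)) * (A m) ^ j₂ := by rw [key]
      _ = ((A m) ^ i₁)⁻¹ * (B m) ^ (k₁ + m ^ (j₁ - i₂) * k₂) * (A m) ^ (j₁ - i₂ + j₂) := by
          rw [zpow_add, pow_add]; group
  · refine ⟨i₁ + (i₂ - j₁), j₂, m ^ (i₂ - j₁) * k₁ + k₂, ?_⟩
    have key : (B m) ^ k₁ * ((A m) ^ (i₂ - j₁))⁻¹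
        = ((A m) ^ (i₂ - j₁))⁻¹ * (B m) ^ (m ^ (i₂ - j₁) * k₁) := by
      rw [← conj_pow_zpow]; group
    have hi : ((A m) ^ i₂)⁻¹ = ((A m) ^ (i₂ - j₁))⁻¹ * ((A m) ^ j₁)⁻¹ := by
      rw [← mul_inv_rev, ← pow_add]; congr 2; omega
    calc ((A m) ^ i₁)⁻¹ * (B m) ^ k₁ * (A m) ^ j₁ * (((A m) ^ i₂)⁻¹ * (B m) ^ k₂ * (A m) ^ j₂)
        = ((A m) ^ i₁)⁻¹ * ((B m) ^ k₁ * ((A m) ^ (i₂ - j₁))⁻¹) * (B m) ^ k₂ * (A m) ^ j₂ := by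
          rw [hi]; group
      _ = ((A m) ^ i₁)⁻¹ * (((A m) ^ (i₂ - j₁))⁻¹ * (B m) ^ (m ^ (i₂ - j₁) * k₁)) *
            (B m) ^ k₂ * (A m) ^ j₂ := by rw [key]
      _ = ((A m) ^ (i₁ + (i₂ - j₁)))⁻¹ * (B m) ^ (m ^ (i₂ - j₁) * k₁ + k₂) * (A m) ^ j₂ := by
          rw [zpow_add, pow_add, mul_inv_rev]; group

lemma nf_inv {g : BS m} (h : NF m g) : NF m g⁻¹ := by
  obtain ⟨i, j, k, rfl⟩ := h
  exact ⟨j, i, -k, by group⟩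

def nfSubgroup : Subgroup (BS m) where
  carrier := {g | NF m g}
  one_mem' := nf_one m
  mul_mem' := nf_mul m
  inv_mem' := nf_inv m

lemma nf_all (g : BS m) : NF m g := by
  have htop : nfSubgroup m = ⊤ := by
    rw [eq_top_iff, ← PresentedGroup.closure_range_of (bsRel m), Subgroup.closure_le]
    rintro _ ⟨x, rfl⟩
    cases x
    · exact ⟨0, 0, 1, by simp [B]⟩
    · exact ⟨0, 1, 0, by simp [A]⟩
  have : g ∈ nfSubgroup m := htop ▸ Subgroup.mem_top g
  exact this

end BSaux

open Matrix.SpecialLinearGroup in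
lemma sl_b_zpow (x : Matrix.SpecialLinearGroup (Fin 2) ℝ)
    (hb : (x : Matrix (Fin 2) (Fin 2) ℝ) = !![1, 1; 0, 1]) (k : ℤ) :
    ((x ^ k : Matrix.SpecialLinearGroup (Fin 2) ℝ) : Matrix (Fin 2) (Fin 2) ℝ)
      = !![1, (k : ℝ); 0, 1] := by
  have hinv : ((x⁻¹ : Matrix.SpecialLinearGroup (Fin 2) ℝ) : Matrix (Fin 2) (Fin 2) ℝ)
      = !![1, -1; 0, 1] := by
    have h1 : x * (show Matrix.SpecialLinearGroup (Fin 2) ℝ from ⟨!![1, -1; 0, 1], by simp [Matrix.det_fin_two_of]⟩) = 1 := by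
      apply Subtype.ext
      rw [coe_mul, hb, coe_one]
      show _ * !![1, -1; 0, 1] = _
      rw [Matrix.mul_fin_two, Matrix.one_fin_two]
      norm_num
    rw [← eq_inv_of_mul_eq_one_right h1]
  induction k using Int.induction_on with
  | zero => simp [Matrix.one_fin_two]
  | succ n ih =>
    rw [_root_.zpow_add_one, coe_mul, ih, hb, Matrix.mul_fin_two]
    push_cast
    ring_nf
  | pred n ih =>
    rw [_root_.zpow_sub_one, coe_mul, ih, hinv, Matrix.mul_fin_two]
    push_cast
    ring_nf

open Matrix.SpecialLinearGroup in
lemma sl_a_pow (s : ℝ) (x : Matrix.SpecialLinearGroup (Fin 2) ℝ)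
    (ha : (x : Matrix (Fin 2) (Fin 2) ℝ) = !![s, 0; 0, s⁻¹]) (n : ℕ) :
    ((x ^ n : Matrix.SpecialLinearGroup (Fin 2) ℝ) : Matrix (Fin 2) (Fin 2) ℝ)
      = !![s ^ n, 0; 0, (s⁻¹) ^ n] := by
  induction n with
  | zero => simp [Matrix.one_fin_two]
  | succ n ih =>
    rw [pow_succ, coe_mul, ih, ha, Matrix.mul_fin_two]
    ring_nf

/-- The homomorphism `BS(1,m) → SL(2,ℝ)` sending `a ↦ [[√|m|,0],[0,1/√|m|]]`
and `b ↦ [[1,1],[0,1]]` is injective, i.e. `BS(1,m)` acts freely on ℍ². -/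
theorem stmt_13 (m : ℤ) (hm : 2 ≤ |m|)
    (φ : BS m →* Matrix.SpecialLinearGroup (Fin 2) ℝ)
    (ha : (φ (PresentedGroup.of true) : Matrix (Fin 2) (Fin 2) ℝ) =
      !![Real.sqrt |m|, 0; 0, (Real.sqrt |m|)⁻¹])
    (hb : (φ (PresentedGroup.of false) : Matrix (Fin 2) (Fin 2) ℝ) =
      !![1, 1; 0, 1]) :
    Function.Injective φ := by
  set s : ℝ := Real.sqrt |m| with hs_def
  have hs : 1 < s := by
    rw [hs_def, show (1 : ℝ) = Real.sqrt 1 by simp]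
    apply Real.sqrt_lt_sqrt (by norm_num)
    have : (2 : ℝ) ≤ (|m| : ℝ) := by exact_mod_cast hm
    linarith
  have hs0 : (0 : ℝ) < s := lt_trans one_pos hs
  rw [injective_iff_map_eq_one]
  intro g hg
  obtain ⟨i, j, k, rfl⟩ := BSaux.nf_all m g
  have hmap : (φ (BSaux.A m) ^ i)⁻¹ * (φ (BSaux.B m) ^ k * φ (BSaux.A m) ^ j) = 1 := by
    rw [← map_pow, ← map_zpow, ← map_pow, ← map_inv, ← map_mul, ← map_mul, ← mul_assoc]
    exact hg
  rw [inv_mul_eq_one] at hmap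
  have hmat := congrArg (fun x : Matrix.SpecialLinearGroup (Fin 2) ℝ =>
      (x : Matrix (Fin 2) (Fin 2) ℝ)) hmap
  simp only [Matrix.SpecialLinearGroup.coe_mul] at hmat
  rw [sl_a_pow s _ ha i, sl_a_pow s _ ha j, sl_b_zpow _ hb k, Matrix.mul_fin_two] at hmat
  have h01 : (0 : ℝ) = 1 * 0 + (k : ℝ) * (s⁻¹) ^ j := by
    have := congrFun (congrFun hmat 0) 1
    simpa using this
  have h00 : s ^ i = 1 * s ^ j + (k : ℝ) * 0 := by
    have := congrFun (congrFun hmat 0) 0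
    simpa using this
  have hk : k = 0 := by
    have hne : (s⁻¹ : ℝ) ^ j ≠ 0 := pow_ne_zero _ (inv_ne_zero (ne_of_gt hs0))
    have : (k : ℝ) = 0 := by
      rcases mul_eq_zero.mp (by linarith : (k : ℝ) * (s⁻¹) ^ j = 0) with h | h
      · exact h
      · exact absurd h hne
    exact_mod_cast this
  have hij : i = j := by
    have : s ^ i = s ^ j := by linarith
    exact (pow_right_strictMono₀ hs).injective this
  subst hk hij
  simp
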